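/- Let p ≥ 2 be an integer, let (a_i)_{i≥1} be a sequence with 0 ≤ a_i ≤ p−1, and let x = ∑_{i≥1} a_i·p^{−i}. Then g_p(x) = ∑_{i≥1} a_{i+1}·p^{−i} if a_1 is even, and g_p(x) = ∑_{i≥1} (p − 1 − a_{i+1})·p^{−i} if a_1 is odd. -/

import Mathlib

/-- The continuous piecewise linear map `g_p : [0,1] → [0,1]` that goes up and down
`p` times: on `[k/p, (k+1)/p]` it is `x ↦ p·x − k` for `k` even and
`x ↦ k + 1 − p·x` for `k` odd. -/
noncomputable def gp (p : ℕ) (x : ℝ) : ℝ :=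
  if Even ⌊(p : ℝ) * x⌋ then (p : ℝ) * x - ⌊(p : ℝ) * x⌋
  else (⌊(p : ℝ) * x⌋ : ℝ) + 1 - (p : ℝ) * x

/-- The action of `g_p` on base-`p` expansions: if `x = ∑_{i≥1} a_i·p^{−i}` with
`0 ≤ a_i ≤ p − 1`, then `g_p(x) = ∑_{i≥1} a_{i+1}·p^{−i}` if `a_1` is even, and
`g_p(x) = ∑_{i≥1} (p − 1 − a_{i+1})·p^{−i}` if `a_1` is odd. -/
theorem gp_basep_expansion (p : ℕ) (hp : 2 ≤ p)
    (a : ℕ → ℕ) (ha : ∀ i, 1 ≤ i → a i < p)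
    (x : ℝ) (hx : x = ∑' i : ℕ, (a (i + 1) : ℝ) / (p : ℝ) ^ (i + 1)) :
    (Even (a 1) → gp p x = ∑' i : ℕ, (a (i + 2) : ℝ) / (p : ℝ) ^ (i + 1)) ∧
    (Odd (a 1) → gp p x = ∑' i : ℕ, ((p - 1 - a (i + 2) : ℕ) : ℝ) / (p : ℝ) ^ (i + 1)) := by
  have hp1 : (1:ℝ) < p := by exact_mod_cast hp.trans_lt' one_lt_two
  have hp0 : (0:ℝ) < p := by linarith
  set r : ℝ := 1 / p with hr
  have hr0 : 0 ≤ r := by positivity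
  have hr1 : r < 1 := by rw [hr, div_lt_one hp0]; linarith
  have hpow : ∀ i : ℕ, (1:ℝ) / (p:ℝ) ^ (i+1) = r ^ (i+1) := by
    intro i; rw [hr, div_pow, one_pow]
  have hsumr : Summable (fun i : ℕ => r ^ (i+1)) := by
    have := (summable_geometric_of_lt_one hr0 hr1).mul_left r
    simpa [pow_succ, mul_comm] using this
  have htr : ∑' i : ℕ, r ^ (i+1) = 1 / ((p:ℝ) - 1) := by
    calc ∑' i : ℕ, r ^ (i+1) = ∑' i : ℕ, r * r ^ i := by
          simp [pow_succ, mul_comm]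
      _ = r * (1 - r)⁻¹ := by rw [tsum_mul_left, tsum_geometric_of_lt_one hr0 hr1]
      _ = 1 / ((p:ℝ) - 1) := by
          rw [hr]; field_simp
  -- summability of digit series
  have hsumb : ∀ b : ℕ → ℝ, (∀ i, 0 ≤ b i) → (∀ i, b i ≤ p) →
      Summable (fun i : ℕ => b i / (p:ℝ) ^ (i+1)) := by
    intro b hb0 hbp
    have hle : ∀ i, b i / (p:ℝ) ^ (i+1) ≤ (p:ℝ) * r ^ (i+1) := by
      intro i
      rw [← hpow i, mul_div_assoc', mul_one]
      gcongr
      exact hbp i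
    exact Summable.of_nonneg_of_le (fun i => div_nonneg (hb0 i) (by positivity)) hle (hsumr.mul_left _)
  have hbd : ∀ i, (a (i+2) : ℝ) ≤ p := fun i => by
    exact_mod_cast (ha (i+2) (by omega)).le
  have hy_s : Summable (fun i : ℕ => (a (i+2) : ℝ) / (p:ℝ) ^ (i+1)) :=
    hsumb _ (fun i => by positivity) hbd
  set y : ℝ := ∑' i : ℕ, (a (i+2) : ℝ) / (p:ℝ) ^ (i+1) with hy
  have hS1_s : Summable (fun i : ℕ => ((p:ℝ) - 1) / (p:ℝ) ^ (i+1)) :=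
    hsumb _ (fun i => by linarith) (fun i => by linarith)
  have hS1 : ∑' i : ℕ, ((p:ℝ) - 1) / (p:ℝ) ^ (i+1) = 1 := by
    have h1 : ∀ i : ℕ, ((p:ℝ) - 1) / (p:ℝ) ^ (i+1) = ((p:ℝ)-1) * r ^ (i+1) := by
      intro i; rw [← hpow i]; ring
    rw [tsum_congr h1, tsum_mul_left, htr]
    rw [mul_one_div, div_self (ne_of_gt (by linarith))]
  have hy0 : 0 ≤ y := tsum_nonneg (fun i => by positivity)
  have hle1 : ∀ i, (a (i+2) : ℝ) ≤ (p:ℝ) - 1 := by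
    intro i
    have h := ha (i+2) (by omega)
    have : (a (i+2) : ℝ) + 1 ≤ p := by exact_mod_cast h
    linarith
  have hy1 : y ≤ 1 := by
    rw [hy, ← hS1]
    refine Summable.tsum_le_tsum (fun i => ?_) hy_s hS1_s
    gcongr
    exact hle1 i
  -- p * x = a 1 + y
  have hx_s : Summable (fun i : ℕ => (a (i+1) : ℝ) / (p:ℝ) ^ (i+1)) :=
    hsumb _ (fun i => by positivity) (fun i => by exact_mod_cast (ha (i+1) (by omega)).le)
  have hpx : (p:ℝ) * x = a 1 + y := by
    have hsplit := Summable.tsum_eq_zero_add hx_s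
    have hshift : ∑' i : ℕ, (a (i+1+1) : ℝ) / (p:ℝ) ^ (i+1+1) = y * r := by
      rw [hy, ← tsum_mul_right]
      refine tsum_congr (fun i => ?_)
      rw [hr, pow_succ]
      field_simp
    rw [hx, hsplit, hshift, pow_one]
    rw [hr]
    field_simp
  -- odd sum identity
  have hodd_sum : ∑' i : ℕ, ((p - 1 - a (i + 2) : ℕ) : ℝ) / (p:ℝ) ^ (i+1) = 1 - y := by
    have hcast : ∀ i : ℕ, ((p - 1 - a (i + 2) : ℕ) : ℝ) = ((p:ℝ) - 1) - (a (i+2) : ℝ) := by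
      intro i
      have h1 : a (i+2) ≤ p - 1 := by have := ha (i+2) (by omega); omega
      have h2 : 1 ≤ p := by omega
      push_cast [Nat.cast_sub h1, Nat.cast_sub h2]
      ring
    calc ∑' i : ℕ, ((p - 1 - a (i + 2) : ℕ) : ℝ) / (p:ℝ) ^ (i+1)
        = ∑' i : ℕ, (((p:ℝ) - 1) / (p:ℝ) ^ (i+1) - (a (i+2) : ℝ) / (p:ℝ) ^ (i+1)) := by
          refine tsum_congr (fun i => ?_); rw [hcast i]; ring
      _ = 1 - y := by rw [Summable.tsum_sub hS1_s hy_s, hS1, hy]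
  -- final case analysis
  rcases hy1.lt_or_eq with hylt | hyeq
  · have hfl : ⌊(p:ℝ) * x⌋ = (a 1 : ℤ) := by
      rw [Int.floor_eq_iff, hpx]
      constructor
      · push_cast; linarith
      · push_cast; linarith
    constructor
    · intro hev
      have : Even ⌊(p:ℝ) * x⌋ := by rw [hfl]; exact (Int.even_coe_nat _).mpr hev
      rw [gp, if_pos this, hfl, hpx]
      push_cast
      ring
    · intro hodd
      have : ¬ Even ⌊(p:ℝ) * x⌋ := by
        rw [hfl, Int.even_coe_nat, ← Nat.not_odd_iff_even]
        simp [hodd]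
      rw [gp, if_neg this, hfl, hpx, hodd_sum]
      push_cast
      ring
  · have hpx1 : (p:ℝ) * x = ((a 1 : ℤ) + 1 : ℤ) := by rw [hpx, hyeq]; push_cast; ring
    have hfl : ⌊(p:ℝ) * x⌋ = (a 1 : ℤ) + 1 := by rw [hpx1, Int.floor_intCast]
    constructor
    · intro hev
      have : ¬ Even ⌊(p:ℝ) * x⌋ := by
        rw [hfl]
        simp [Int.even_add_one, Int.even_coe_nat, hev]
      rw [gp, if_neg this, hfl, hpx]
      push_cast
      linarith
    · intro hodd
      have : Even ⌊(p:ℝ) * x⌋ := by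
        rw [hfl, Int.even_add_one, Int.even_coe_nat]
        simp [← Nat.not_odd_iff_even, hodd]
      rw [gp, if_pos this, hfl, hpx, hodd_sum]
      push_cast
      linarith
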